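/- Let q be a prime power, n ≥ 0, n₁ = ⌊(n+2)/2⌋, n₂ = ⌊(n+3)/2⌋, and let π₁ satisfy 0 ≤ π₁ ≤ n₁ if n is odd and 0 ≤ π₁ ≤ n₁ - 1 if n is even. For α ∈ F_q^{n+1} with ρ(α) = 0, one has π(α) = π₁ if and only if αᵢ = 0 for all i < (n+1) - π₁, α_{(n+1)-π₁} ≠ 0, and the remaining entries α_i for i > (n+1)-π₁ are arbitrary in F_q. -/

import Mathlib

open Matrix Polynomial

/-- The `l × m` Hankel matrix whose `(i,j)` entry (zero-indexed) is `α (i + j)`. -/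
def hankel (F : Type) [Field F] (l m : ℕ) (α : ℕ → F) : Matrix (Fin l) (Fin m) F :=
  Matrix.of fun i j => α (i.1 + j.1)

/-- `ρ(α)`: the largest `l ≤ n₁ = (n+2)/2` such that the top-left `l × l` Hankel matrix
of `α` is invertible (`0` if none exists). -/
noncomputable def rhoC (F : Type) [Field F] (n : ℕ) (α : ℕ → F) : ℕ :=
  sSup {l | l ≤ (n + 2) / 2 ∧ (hankel F l l α).det ≠ 0}

/-- `π(α) = rank H_{n₁,n₂}(α) - ρ(α)`. -/
noncomputable def piC (F : Type) [Field F] (n : ℕ) (α : ℕ → F) : ℕ :=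
  (hankel F ((n + 2) / 2) ((n + 3) / 2) α).rank - rhoC F n α

/-- `deg B ≤ k` for an integer bound `k` (so `k < 0` forces `B = 0`). -/
def degLE (F : Type) [Field F] (B : Polynomial F) (k : ℤ) : Prop :=
  ∀ i : ℕ, k < (i : ℤ) → B.coeff i = 0

/-- `A₁, A₂` are characteristic polynomials for the sequence `α` (of length `n+1`) with
first characteristic degree `c₁ = r` and second characteristic degree `c₂ = n+2-r`:
the kernels of all the Hankel matrices `H_{l,m}(α)`, `l+m-2 = n`, consist exactly of the
(coefficient vectors of) polynomials `B₁A₁ + B₂A₂` with `deg B₁ ≤ m - c₁ - 1` and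
`deg B₂ ≤ m - c₂ - 1`. -/
def IsCharSeq (F : Type) [Field F] (n r : ℕ) (A₁ A₂ : Polynomial F) (α : ℕ → F) : Prop :=
  ∀ l m : ℕ, 1 ≤ l → 1 ≤ m → l + m = n + 2 →
    {v : Fin m → F | (hankel F l m α).mulVec v = 0} =
    {v : Fin m → F | ∃ B₁ B₂ : Polynomial F,
      degLE F B₁ ((m : ℤ) - r - 1) ∧ degLE F B₂ ((m : ℤ) - ((n : ℤ) + 2 - r) - 1) ∧
      v = fun i : Fin m => (B₁ * A₁ + B₂ * A₂).coeff (i : ℕ)}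

/-- A sequence `α ∈ F^{n+1}` viewed as a function `ℕ → F` (zero beyond index `n`). -/
def extSeq (F : Type) [Field F] (n : ℕ) (α : Fin (n + 1) → F) : ℕ → F :=
  fun i => if h : i < n + 1 then α ⟨i, h⟩ else 0

/-- The extension of a sequence of length `n+1` by a new entry `c` at index `n+1`. -/
def extendSeq (F : Type) [Field F] (n : ℕ) (α : ℕ → F) (c : F) : ℕ → F :=
  fun i => if i = n + 1 then c else α i

section Aux

variable {F : Type} [Field F]

/-- Rank of a submatrix (arbitrary row/column selections) is at most the rank. -/
lemma rank_submatrix_le_aux {a b a' b' : ℕ} (A : Matrix (Fin a) (Fin b) F)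
    (f : Fin a' → Fin a) (g : Fin b' → Fin b) :
    (A.submatrix f g).rank ≤ A.rank := by
  have h1 : A.submatrix f (id : Fin b → Fin b) =
      ((1 : Matrix (Fin a) (Fin a) F).submatrix f (Equiv.refl (Fin a))) * A := by
    rw [Matrix.one_submatrix_mul]
    rfl
  have h2 : A.submatrix f g = (A.submatrix f id).submatrix id g := rfl
  have h3 : (A.submatrix f id).submatrix id g =
      (A.submatrix f id) * ((1 : Matrix (Fin b) (Fin b) F).submatrix (Equiv.refl (Fin b)) g) := by
    rw [Matrix.mul_submatrix_one]
    rfl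
  calc (A.submatrix f g).rank
      = ((A.submatrix f id) * ((1 : Matrix (Fin b) (Fin b) F).submatrix (Equiv.refl (Fin b)) g)).rank := by rw [h2, h3]
    _ ≤ (A.submatrix f id).rank := Matrix.rank_mul_le_left _ _
    _ = (((1 : Matrix (Fin a) (Fin a) F).submatrix f (Equiv.refl (Fin a))) * A).rank := by
        rw [h1]
    _ ≤ A.rank := Matrix.rank_mul_le_right _ _

/-- Determinant of the `(k+1) × (k+1)` Hankel matrix of a sequence starting with `k` zeros
followed by a nonzero entry. -/
lemma hankel_det_ne_zero {k : ℕ} (α : ℕ → F)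
    (h0 : ∀ i, i < k → α i = 0) (hne : α k ≠ 0) :
    (hankel F (k + 1) (k + 1) α).det ≠ 0 := by
  set M := hankel F (k + 1) (k + 1) α with hM
  have hperm := Matrix.det_permute' (Fin.revPerm : Equiv.Perm (Fin (k + 1))) M
  have htri : (M.submatrix id ⇑(Fin.revPerm : Equiv.Perm (Fin (k + 1)))).BlockTriangular
      OrderDual.toDual := by
    intro i j hij
    have hij' : (i : ℕ) < (j : ℕ) := hij
    have hjr : ((Fin.revPerm j : Fin (k + 1)) : ℕ) = k - (j : ℕ) := by
      simp [Fin.revPerm, Fin.val_rev]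
    have hj : (j : ℕ) ≤ k := Nat.lt_succ_iff.mp j.isLt
    simp only [Matrix.submatrix_apply, id_eq, hM, hankel, Matrix.of_apply]
    apply h0
    rw [hjr]
    omega
  have hdet : (M.submatrix id ⇑(Fin.revPerm : Equiv.Perm (Fin (k + 1)))).det ≠ 0 := by
    rw [Matrix.det_of_lowerTriangular _ htri]
    apply Finset.prod_ne_zero_iff.mpr
    intro i _
    have hir : ((Fin.revPerm i : Fin (k + 1)) : ℕ) = k - (i : ℕ) := by
      simp [Fin.revPerm, Fin.val_rev]
    have hi : (i : ℕ) ≤ k := Nat.lt_succ_iff.mp i.isLt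
    simp only [Matrix.submatrix_apply, id_eq, hM, hankel, Matrix.of_apply]
    rw [hir]
    have : (i : ℕ) + (k - (i : ℕ)) = k := by omega
    rw [this]
    exact hne
  intro h
  rw [hperm, h, mul_zero] at hdet
  exact hdet rfl

/-- Rank of the `n₁ × n₂` Hankel matrix of a sequence beginning with `k ≥ n₁` zeros
followed by a nonzero entry. -/
lemma hankel_rank_eq {n k : ℕ} (α : ℕ → F) (hk : k ≤ n) (hk1 : (n + 2) / 2 ≤ k)
    (h0 : ∀ i, i < k → α i = 0) (hne : α k ≠ 0) :
    (hankel F ((n + 2) / 2) ((n + 3) / 2) α).rank = n + 1 - k := by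
  set n₁ := (n + 2) / 2 with hn₁
  set n₂ := (n + 3) / 2 with hn₂
  have hn : n₁ + n₂ = n + 2 := by omega
  set M := hankel F n₁ n₂ α with hM
  set r := n + 1 - k with hr
  have hrpos : 1 ≤ r := by omega
  have hrn : r ≤ n₁ := by omega
  set d := n₁ - r with hd
  have hdr : d + r = n₁ := by omega
  have hdk : d + n₂ = k + 1 := by omega
  -- lower bound: an invertible r × r submatrix
  have hlow : r ≤ M.rank := by
    set u : Fin r → Fin n₁ := fun t => ⟨d + t.1, by have := t.2; omega⟩ with hu
    set v : Fin r → Fin n₂ := fun s => ⟨k - d - s.1, by have := s.2; omega⟩ with hv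
    set C := M.submatrix u v with hC
    have htri : C.BlockTriangular OrderDual.toDual := by
      intro t s hts
      have hts' : (t : ℕ) < (s : ℕ) := hts
      have hs := s.2
      simp only [hC, hM, hu, hv, Matrix.submatrix_apply, hankel, Matrix.of_apply]
      apply h0
      omega
    have hdet : C.det ≠ 0 := by
      rw [Matrix.det_of_lowerTriangular _ htri]
      apply Finset.prod_ne_zero_iff.mpr
      intro t _
      have ht := t.2
      simp only [hC, hM, hu, hv, Matrix.submatrix_apply, hankel, Matrix.of_apply]
      have : d + (t : ℕ) + (k - d - (t : ℕ)) = k := by omega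
      rw [this]
      exact hne
    have hCrank : C.rank = r := by
      have : C.rank = Fintype.card (Fin r) :=
        Matrix.rank_of_isUnit C ((Matrix.isUnit_iff_isUnit_det C).mpr
          (isUnit_iff_ne_zero.mpr hdet))
      simpa using this
    calc r = C.rank := hCrank.symm
      _ ≤ M.rank := rank_submatrix_le_aux M u v
  -- upper bound: all rows with index < d are zero
  have hup : M.rank ≤ r := by
    set B := M.submatrix (fun t : Fin r => (⟨d + t.1, by have := t.2; omega⟩ : Fin n₁)) id
      with hB
    have hspan : Submodule.span F (Set.range M) ≤ Submodule.span F (Set.range B) := by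
      rw [Submodule.span_le]
      rintro x ⟨i, rfl⟩
      by_cases hi : (i : ℕ) < d
      · have : M i = 0 := by
          funext j
          have hj := j.2
          simp only [hM, hankel, Matrix.of_apply]
          apply h0
          omega
        rw [this]
        exact Submodule.zero_mem _
      · have hi2 := i.2
        have : M i = B ⟨(i : ℕ) - d, by omega⟩ := by
          funext j
          simp only [hB, Matrix.submatrix_apply, id_eq, hM, hankel, Matrix.of_apply]
          congr 1
          omega
        rw [this]
        exact Submodule.subset_span ⟨_, rfl⟩
    calc M.rank = Module.finrank F (Submodule.span F (Set.range M)) :=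
          Matrix.rank_eq_finrank_span_row M
      _ ≤ Module.finrank F (Submodule.span F (Set.range B)) := Submodule.finrank_mono hspan
      _ = B.rank := (Matrix.rank_eq_finrank_span_row B).symm
      _ ≤ r := Matrix.rank_le_height B
  omega

/-- The Hankel matrix of the zero sequence (up to index `n`) has rank `0`. -/
lemma hankel_rank_zero {n : ℕ} (α : ℕ → F) (h0 : ∀ i, i ≤ n → α i = 0) :
    (hankel F ((n + 2) / 2) ((n + 3) / 2) α).rank = 0 := by
  have : hankel F ((n + 2) / 2) ((n + 3) / 2) α = 0 := by
    ext i j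
    have hi := i.2
    have hj := j.2
    simp only [hankel, Matrix.of_apply, Matrix.zero_apply]
    apply h0
    omega
  rw [this, Matrix.rank_zero]

end Aux

/-- for `ρ(α) = 0`, one has `π(α) = π₁` iff `αᵢ = 0` for all `i < (n+1) - π₁`
and `α_{(n+1)-π₁} ≠ 0` (the remaining entries being arbitrary). -/
theorem stmt_1 (F : Type) [Field F] [Fintype F] (n π₁ : ℕ)
    (hπo : Odd n → π₁ ≤ (n + 2) / 2)
    (hπe : Even n → π₁ ≤ (n + 2) / 2 - 1)
    (α : ℕ → F) (hρ : rhoC F n α = 0) :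
    piC F n α = π₁ ↔
      ((∀ i : ℕ, i ≤ n → i < n + 1 - π₁ → α i = 0) ∧
       (∀ i : ℕ, i ≤ n → i = n + 1 - π₁ → α i ≠ 0)) := by
  classical
  have hpi : piC F n α = (hankel F ((n + 2) / 2) ((n + 3) / 2) α).rank := by
    rw [piC, hρ, Nat.sub_zero]
  -- From ρ(α) = 0: no small nonzero leading entry
  have hrho : ∀ k : ℕ, (∀ i, i < k → α i = 0) → α k ≠ 0 → (n + 2) / 2 ≤ k := by
    intro k h0 hne
    by_contra hlt
    push_neg at hlt
    have hmem : k + 1 ∈ {l | l ≤ (n + 2) / 2 ∧ (hankel F l l α).det ≠ 0} :=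
      ⟨by omega, hankel_det_ne_zero α h0 hne⟩
    have hbdd : BddAbove {l | l ≤ (n + 2) / 2 ∧ (hankel F l l α).det ≠ 0} :=
      ⟨(n + 2) / 2, fun x hx => hx.1⟩
    have := le_csSup hbdd hmem
    rw [show sSup {l | l ≤ (n + 2) / 2 ∧ (hankel F l l α).det ≠ 0} = rhoC F n α from rfl,
      hρ] at this
    omega
  constructor
  · intro h
    rw [hpi] at h
    by_cases hall : ∀ i, i ≤ n → α i = 0
    · have h0 : (hankel F ((n + 2) / 2) ((n + 3) / 2) α).rank = 0 :=
        hankel_rank_zero α hall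
      have hπ0 : π₁ = 0 := by omega
      subst hπ0
      refine ⟨fun i hi _ => hall i hi, fun i hi hie => ?_⟩
      omega
    · push_neg at hall
      obtain ⟨i₀, hi₀n, hi₀⟩ := hall
      have hex : ∃ i, i ≤ n ∧ α i ≠ 0 := ⟨i₀, hi₀n, hi₀⟩
      set k := Nat.find hex with hkdef
      obtain ⟨hkn, hkne⟩ := Nat.find_spec hex
      have hmin : ∀ i, i < k → α i = 0 := by
        intro i hi
        by_contra hcon
        exact Nat.find_min hex hi ⟨by omega, hcon⟩
      have hk1 : (n + 2) / 2 ≤ k := hrho k hmin hkne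
      rw [hankel_rank_eq α hkn hk1 hmin hkne] at h
      have hkeq : k = n + 1 - π₁ := by omega
      refine ⟨fun i hi hilt => hmin i (by omega), fun i hi hie => by rwa [hie, ← hkeq]⟩
  · rintro ⟨h1, h2⟩
    rw [hpi]
    by_cases hπ0 : π₁ = 0
    · subst hπ0
      exact hankel_rank_zero α (fun i hi => h1 i hi (by omega))
    · have hπn : π₁ ≤ n + 1 := by
        rcases Nat.even_or_odd n with he | ho
        · have := hπe he
          have h2 := Nat.even_iff.mp he
          omega
        · have := hπo ho
          have h2 := Nat.odd_iff.mp ho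
          omega
      set k := n + 1 - π₁ with hkdef
      have hkn : k ≤ n := by omega
      have hk1 : (n + 2) / 2 ≤ k := by
        rcases Nat.even_or_odd n with he | ho
        · have := hπe he
          have h2 := Nat.even_iff.mp he
          omega
        · have := hπo ho
          have h2 := Nat.odd_iff.mp ho
          omega
      have hkne : α k ≠ 0 := h2 k hkn rfl
      have hmin : ∀ i, i < k → α i = 0 := fun i hi => h1 i (by omega) (by omega)
      rw [hankel_rank_eq α hkn hk1 hmin hkne]
      omega
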